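/- Let Γ : S¹ → ℝ² be C², injective, parameterized by arc length, and suppose Γ is neither (an arc of) a line nor a circle. Then for every unit vector e ∈ ℝ² and every s₀ ∈ S¹, the 2×2 Gram matrix A(e,s₀) with entries A₁₁ = ∫(e·n)² ds, A₁₂ = A₂₁ = ∫((Γ(s)−Γ(s₀))^⊥·n)(e·n) ds, A₂₂ = ∫((Γ(s)−Γ(s₀))^⊥·n)² ds is positive definite; equivalently, there is no α ∈ ℝ such that (e − α(Γ(s)−Γ(s₀))^⊥)·n(s) = 0 for all s ∈ S¹. -/

import Mathlib

/-- Rotation by π/2: `(x,y)^⊥ = (-y,x)`. -/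
def perp (v : ℝ × ℝ) : ℝ × ℝ := (-v.2, v.1)

/-- Euclidean dot product on `ℝ × ℝ`. -/
def dot (v w : ℝ × ℝ) : ℝ := v.1 * w.1 + v.2 * w.2

open MeasureTheory intervalIntegral in
lemma sq_comb_integral (f g : ℝ → ℝ) (hf : Continuous f) (hg : Continuous g) (L x0 x1 : ℝ) :
    x0 * ((∫ s in (0:ℝ)..L, f s ^ 2) * x0 + (∫ s in (0:ℝ)..L, g s * f s) * x1)
      + x1 * ((∫ s in (0:ℝ)..L, g s * f s) * x0 + (∫ s in (0:ℝ)..L, g s ^ 2) * x1)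
      = ∫ s in (0:ℝ)..L, (x0 * f s + x1 * g s) ^ 2 := by
  have h1 : IntervalIntegrable (fun s => x0 ^ 2 * f s ^ 2) volume 0 L :=
    ((continuous_const.mul (hf.pow 2))).intervalIntegrable _ _
  have h2 : IntervalIntegrable (fun s => (2 * x0 * x1) * (g s * f s)) volume 0 L :=
    ((continuous_const.mul (hg.mul hf))).intervalIntegrable _ _
  have h3 : IntervalIntegrable (fun s => x1 ^ 2 * g s ^ 2) volume 0 L :=
    ((continuous_const.mul (hg.pow 2))).intervalIntegrable _ _
  have key : ∀ s : ℝ, (x0 * f s + x1 * g s) ^ 2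
      = x0 ^ 2 * f s ^ 2 + ((2 * x0 * x1) * (g s * f s) + x1 ^ 2 * g s ^ 2) := fun s => by ring
  simp only [key]
  rw [intervalIntegral.integral_add h1 (h2.add h3), intervalIntegral.integral_add h2 h3,
    intervalIntegral.integral_const_mul, intervalIntegral.integral_const_mul,
    intervalIntegral.integral_const_mul]
  ring

open MeasureTheory in
lemma integral_sq_pos (L : ℝ) (hL : 0 < L) (h : ℝ → ℝ) (hc : Continuous h)
    (hper : Function.Periodic h L) (s₁ : ℝ) (hs₁ : h s₁ ≠ 0) :
    0 < ∫ s in (0:ℝ)..L, h s ^ 2 := by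
  obtain ⟨y, hy, hxy⟩ := hper.exists_mem_Ico₀ hL s₁
  have hyne : h y ≠ 0 := by rw [← hxy]; exact hs₁
  set s₂ : ℝ := if y = 0 then L else y with hs₂def
  have hs₂mem : s₂ ∈ Set.Ioc (0:ℝ) L := by
    by_cases h0 : y = 0
    · simp [hs₂def, h0, hL, le_refl]
    · simp only [hs₂def, h0, if_false]
      exact ⟨lt_of_le_of_ne hy.1 (Ne.symm h0), le_of_lt hy.2⟩
  have hs₂ne : h s₂ ≠ 0 := by
    by_cases h0 : y = 0
    · have hL0 : h L = h 0 := by simpa using hper 0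
      simp only [hs₂def, h0, if_true]
      have hy0 := hyne
      rw [h0] at hy0
      rwa [hL0]
    · simp only [hs₂def, h0, if_false]; exact hyne
  rw [intervalIntegral.integral_pos_iff_support_of_nonneg_ae
    (Filter.Eventually.of_forall (fun s => sq_nonneg (h s)))
    ((hc.pow 2).intervalIntegrable 0 L)]
  refine ⟨hL, ?_⟩
  obtain ⟨ε, hε, hball⟩ := Metric.eventually_nhds_iff.mp (hc.continuousAt.eventually_ne hs₂ne)
  set a : ℝ := max (s₂ - ε / 2) (s₂ / 2) with ha_def
  have ha1 : a < s₂ := max_lt (by linarith) (by linarith [hs₂mem.1])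
  have hsub : Set.Ioo a s₂ ⊆ Function.support (fun s => h s ^ 2) ∩ Set.Ioc 0 L := by
    intro t ht
    have hta : a < t := ht.1
    have hts : t < s₂ := ht.2
    have h1 : s₂ - ε / 2 ≤ a := le_max_left _ _
    have h2 : s₂ / 2 ≤ a := le_max_right _ _
    constructor
    · have hdist : dist t s₂ < ε := by
        rw [Real.dist_eq, abs_of_nonpos (by linarith)]; linarith
      exact pow_ne_zero 2 (hball hdist)
    · exact ⟨by linarith [hs₂mem.1], by linarith [hs₂mem.2]⟩
  calc (0 : ENNReal) < volume (Set.Ioo a s₂) := by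
        rw [Real.volume_Ioo]; exact ENNReal.ofReal_pos.mpr (by linarith)
    _ ≤ _ := measure_mono hsub

/-- For a closed, injective, arc-length parameterized `C²` curve `Γ` (of length `L`) that is
neither contained in a line nor a circle, the Gram matrix of the functions
`s ↦ e·n(s)` and `s ↦ (Γ(s)−Γ(s₀))^⊥·n(s)` in `L²` is positive definite; equivalently there
is no `α ∈ ℝ` with `(e − α(Γ(s)−Γ(s₀))^⊥)·n(s) = 0` for all `s`. Here `n = Γ'^⊥`. -/
theorem gram_matrix_posDef
    (L : ℝ) (hL : 0 < L) (Γ : ℝ → ℝ × ℝ)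
    (hΓper : Function.Periodic Γ L) (hΓ : ContDiff ℝ 2 Γ)
    (harc : ∀ s, dot (deriv Γ s) (deriv Γ s) = 1)
    (hinj : ∀ s ∈ Set.Ico (0 : ℝ) L, ∀ s' ∈ Set.Ico (0 : ℝ) L, Γ s = Γ s' → s = s')
    (hnotline : ¬ ∃ p v : ℝ × ℝ, ∀ s : ℝ, ∃ t : ℝ, Γ s = p + t • v)
    (hnotcircle : ¬ ∃ (ctr : ℝ × ℝ) (ρ : ℝ), ∀ s : ℝ,
      dot (Γ s - ctr) (Γ s - ctr) = ρ ^ 2) :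
    ∀ (e : ℝ × ℝ), dot e e = 1 → ∀ s₀ : ℝ,
      (Matrix.PosDef
        !![∫ s in (0:ℝ)..L, (dot e (perp (deriv Γ s))) ^ 2,
           ∫ s in (0:ℝ)..L,
             (dot (perp (Γ s - Γ s₀)) (perp (deriv Γ s))) * (dot e (perp (deriv Γ s)));
           ∫ s in (0:ℝ)..L,
             (dot (perp (Γ s - Γ s₀)) (perp (deriv Γ s))) * (dot e (perp (deriv Γ s))),
           ∫ s in (0:ℝ)..L, (dot (perp (Γ s - Γ s₀)) (perp (deriv Γ s))) ^ 2]) ∧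
      ¬ ∃ α : ℝ, ∀ s : ℝ,
        dot (e - α • perp (Γ s - Γ s₀)) (perp (deriv Γ s)) = 0 := by
  intro e he s₀
  have he2 : e.1 * e.1 + e.2 * e.2 = 1 := he
  have hdiff : Differentiable ℝ Γ := hΓ.differentiable two_ne_zero
  have hGd : ∀ s, HasDerivAt Γ (deriv Γ s) s := fun s => (hdiff s).hasDerivAt
  have h1 : ∀ s, HasDerivAt (fun t => (Γ t).1) (deriv Γ s).1 s := fun s => by
    simpa using ((hGd s).hasFDerivAt.fst).hasDerivAt
  have h2 : ∀ s, HasDerivAt (fun t => (Γ t).2) (deriv Γ s).2 s := fun s => by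
    simpa using ((hGd s).hasFDerivAt.snd).hasDerivAt
  -- f and g
  set f : ℝ → ℝ := fun s => dot e (perp (deriv Γ s)) with hf_def
  set g : ℝ → ℝ := fun s => dot (perp (Γ s - Γ s₀)) (perp (deriv Γ s)) with hg_def
  have hfc : Continuous f := by
    have hdc : Continuous (deriv Γ) := hΓ.continuous_deriv one_le_two
    simp only [hf_def, dot, perp]
    exact (continuous_const.mul hdc.snd.neg).add (continuous_const.mul hdc.fst)
  have hgc : Continuous g := by
    have hdc : Continuous (deriv Γ) := hΓ.continuous_deriv one_le_two
    have hc : Continuous Γ := hΓ.continuous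
    simp only [hg_def, dot, perp]
    fun_prop
  have hderper : ∀ s, deriv Γ (s + L) = deriv Γ s := by
    intro s
    have hfun : (fun t => Γ (t + L)) = Γ := funext hΓper
    calc deriv Γ (s + L) = deriv (fun t => Γ (t + L)) s := (deriv_comp_add_const Γ L s).symm
      _ = deriv Γ s := by rw [hfun]
  have hfper : Function.Periodic f L := by
    intro s; simp only [hf_def, hderper s]
  have hgper : Function.Periodic g L := by
    intro s; simp only [hg_def, hderper s, hΓper s]
  -- the key linear-independence lemma
  have key : ∀ a b : ℝ, (∀ s, a * f s + b * g s = 0) → a = 0 ∧ b = 0 := by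
    intro a b hab
    by_cases ha : a = 0
    · subst ha
      refine ⟨rfl, ?_⟩
      by_contra hb
      -- g vanishes identically; curve is a single point, hence a "circle" with ρ = 0
      have hg0 : ∀ s, g s = 0 := by
        intro s; have := hab s; simp at this
        rcases this with h | h
        · exact absurd h hb
        · exact h
      apply hnotcircle
      refine ⟨Γ s₀, 0, fun s => ?_⟩
      set φ : ℝ → ℝ := fun s =>
        ((Γ s).1 - (Γ s₀).1) ^ 2 + ((Γ s).2 - (Γ s₀).2) ^ 2 with hφdef
      have hφ0 : ∀ s, HasDerivAt φ 0 s := by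
        intro s
        have hD := (((h1 s).sub_const (Γ s₀).1).pow 2).add (((h2 s).sub_const (Γ s₀).2).pow 2)
        refine hD.congr_deriv (Eq.symm ?_)
        have hgs := hg0 s
        simp only [hg_def, dot, perp, Prod.fst_sub, Prod.snd_sub] at hgs
        push_cast
        linear_combination (-2 : ℝ) * hgs
      have hconst : ∀ s, φ s = φ s₀ := fun s =>
        is_const_of_deriv_eq_zero (fun t => (hφ0 t).differentiableAt)
          (fun t => (hφ0 t).deriv) s s₀
      have hφs₀ : φ s₀ = 0 := by simp [hφdef]
      have := hconst s
      simp only [dot, Prod.fst_sub, Prod.snd_sub]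
      rw [hφs₀] at this
      simp only [hφdef] at this
      nlinarith [this]
    · -- a ≠ 0
      exfalso
      by_cases hb : b = 0
      · -- f vanishes identically; curve is a line
        subst hb
        have hf0 : ∀ s, f s = 0 := by
          intro s; have := hab s; simp at this
          rcases this with h | h
          · exact absurd h ha
          · exact h
        set φ : ℝ → ℝ := fun s => (Γ s).1 * e.2 - (Γ s).2 * e.1 with hφdef
        have hφ0 : ∀ s, HasDerivAt φ 0 s := by
          intro s
          have hD := ((h1 s).mul_const e.2).sub ((h2 s).mul_const e.1)
          refine hD.congr_deriv (Eq.symm ?_)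
          have hfs := hf0 s
          simp only [hf_def, dot, perp] at hfs
          linear_combination -hfs
        have hconst : ∀ s, φ s = φ 0 := fun s =>
          is_const_of_deriv_eq_zero (fun t => (hφ0 t).differentiableAt)
            (fun t => (hφ0 t).deriv) s 0
        apply hnotline
        refine ⟨(φ 0 * e.2, -(φ 0 * e.1)), e, fun s => ?_⟩
        refine ⟨(Γ s).1 * e.1 + (Γ s).2 * e.2, ?_⟩
        have hc := hconst s
        simp only [hφdef] at hc
        have hcomp1 : (Γ s).1 = φ 0 * e.2 + ((Γ s).1 * e.1 + (Γ s).2 * e.2) * e.1 := by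
          linear_combination e.2 * hc - (Γ s).1 * he2
        have hcomp2 : (Γ s).2 = -(φ 0 * e.1) + ((Γ s).1 * e.1 + (Γ s).2 * e.2) * e.2 := by
          linear_combination (-e.1) * hc - (Γ s).2 * he2
        ext
        · simpa using hcomp1
        · simpa using hcomp2
      · -- a ≠ 0, b ≠ 0 : curve is a circle
        set α : ℝ := -(b / a) with hαdef
        have hα : α ≠ 0 := by
          simp only [hαdef, neg_ne_zero, div_ne_zero_iff]; exact ⟨hb, ha⟩
        have hfg : ∀ s, f s = α * g s := by
          intro s
          have := hab s
          rw [hαdef]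
          field_simp
          linear_combination this
        set ψ : ℝ → ℝ := fun s => e.2 * (Γ s).1 - e.1 * (Γ s).2
          - (α / 2) * (((Γ s).1 - (Γ s₀).1) ^ 2 + ((Γ s).2 - (Γ s₀).2) ^ 2) with hψdef
        have hψ0 : ∀ s, HasDerivAt ψ 0 s := by
          intro s
          have hD := ((((h1 s).const_mul e.2).sub ((h2 s).const_mul e.1)).sub
            (((((h1 s).sub_const (Γ s₀).1).pow 2).add
              (((h2 s).sub_const (Γ s₀).2).pow 2)).const_mul (α / 2)))
          refine hD.congr_deriv (Eq.symm ?_)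
          have hfgs := hfg s
          simp only [hf_def, hg_def, dot, perp, Prod.fst_sub, Prod.snd_sub] at hfgs
          push_cast
          linear_combination -hfgs
        have hconst : ∀ s, ψ s = ψ s₀ := fun s =>
          is_const_of_deriv_eq_zero (fun t => (hψ0 t).differentiableAt)
            (fun t => (hψ0 t).deriv) s s₀
        apply hnotcircle
        refine ⟨((Γ s₀).1 + e.2 / α, (Γ s₀).2 - e.1 / α), 1 / α, fun s => ?_⟩
        have hc := hconst s
        simp only [hψdef] at hc
        simp only [dot, Prod.fst_sub, Prod.snd_sub]
        clear_value ψ α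
        field_simp
        linear_combination (-2*α) * hc + he2
  -- the "no α" statement
  have noα : ¬ ∃ α : ℝ, ∀ s : ℝ,
      dot (e - α • perp (Γ s - Γ s₀)) (perp (deriv Γ s)) = 0 := by
    rintro ⟨α, hα⟩
    have h10 := key 1 (-α) (fun s => by
      have := hα s
      simp only [hf_def, hg_def, dot, perp, Prod.fst_sub, Prod.snd_sub, Prod.smul_fst,
        Prod.smul_snd, smul_eq_mul, Prod.fst_neg, Prod.snd_neg] at this ⊢
      linear_combination this)
    exact one_ne_zero h10.1
  refine ⟨?_, noα⟩
  constructor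
  · -- Hermitian
    ext i j
    fin_cases i <;> fin_cases j <;> simp [Matrix.conjTranspose_apply]
  · intro x hx
    have hxne : ¬ (x 0 = 0 ∧ x 1 = 0) := by
      rintro ⟨h0, h1⟩
      apply hx
      ext i
      fin_cases i
      · exact h0
      · exact h1
    -- a point where x0 f + x1 g doesn't vanish
    have hex : ∃ s₁, x 0 * f s₁ + x 1 * g s₁ ≠ 0 := by
      by_contra hz
      push_neg at hz
      exact hxne (key (x 0) (x 1) hz)
    obtain ⟨s₁, hs₁⟩ := hex
    have hcomb := sq_comb_integral f g hfc hgc L (x 0) (x 1)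
    have hpos := integral_sq_pos L hL (fun s => x 0 * f s + x 1 * g s)
      ((continuous_const.mul hfc).add (continuous_const.mul hgc))
      (fun s => by simp only [hfper s, hgper s]) s₁ hs₁
    have hpos' : 0 < ∫ s in (0:ℝ)..L, (x 0 * f s + x 1 * g s) ^ 2 := hpos
    simp only [Finsupp.sum_fintype, star_trivial, mul_zero, zero_mul, add_zero, Finset.sum_const_zero, implies_true]
    simp only [star_trivial, Matrix.mulVec, dotProduct, Fin.sum_univ_two]
    simp only [Matrix.cons_val', Matrix.cons_val_zero, Matrix.cons_val_one, Matrix.head_cons,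
      Matrix.empty_val', Matrix.cons_val_fin_one, Matrix.head_fin_const, Matrix.of_apply,
      Matrix.cons_val_one]
    simp only [hf_def, hg_def] at hcomb hpos'
    linarith [hcomb, hpos']
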